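/- Let N, m, ℓ be natural numbers with 3 ≤ ℓ, let F be any field, and let Cl : Fin m → Fin 3 → (Fin N × Bool) encode a 3-CNF formula in which the three variables of each clause are pairwise distinct. If Cl is satisfiable, then there exists a finset S : Finset I such that φ_ℓ(S) = t and ℓ + N + (ℓ−3)·m ≤ S.card ≤ ℓ + N + (ℓ−1)·m. -/

import Mathlib

open Finset

/-- The first coordinate of the Subset-φ instance. -/
def coord0 (N m : ℕ) : Fin (1 + N + m) := ⟨0, by omega⟩

/-- The coordinate of variable `x_i`. -/
def coordVar (N m : ℕ) (i : Fin N) : Fin (1 + N + m) :=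
  ⟨1 + i.val, by have := i.isLt; omega⟩

/-- The coordinate of clause `C_j`. -/
def coordCl (N m : ℕ) (j : Fin m) : Fin (1 + N + m) :=
  ⟨1 + N + j.val, by have := j.isLt; omega⟩

/-- The elements of the Subset-`φ_ℓ` instance constructed from a 3-CNF formula `Cl`. -/
def subsetPhiElem (F : Type*) [Field F] (N m ℓ : ℕ)
    (Cl : Fin m → Fin 3 → (Fin N × Bool)) :
    (Fin ℓ ⊕ ((Fin N × Bool) ⊕ (Fin m × Fin (ℓ - 1)))) → Fin (1 + N + m) → F
  | Sum.inl k, c =>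
      if c = coord0 N m then 1
      else if k.val ≠ 0 ∧ ∃ i : Fin N, c = coordVar N m i then 1
      else 0
  | Sum.inr (Sum.inl (i, b)), c =>
      if c = coordVar N m i then 1
      else if ∃ j : Fin m, c = coordCl N m j ∧ ∃ k : Fin 3, Cl j k = (i, b) then 1
      else 0
  | Sum.inr (Sum.inr (j, _)), c =>
      if c = coordCl N m j then 1 else 0

section Aux

variable {N m : ℕ}

lemma coord0_ne_coordVar (i : Fin N) : coord0 N m ≠ coordVar N m i := by
  simp only [coord0, coordVar, Ne, Fin.mk.injEq]; omega

lemma coord0_ne_coordCl (j : Fin m) : coord0 N m ≠ coordCl N m j := by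
  simp only [coord0, coordCl, Ne, Fin.mk.injEq]; omega

lemma coordVar_ne_coordCl (i : Fin N) (j : Fin m) : coordVar N m i ≠ coordCl N m j := by
  simp only [coordVar, coordCl, Ne, Fin.mk.injEq]; have := i.isLt; omega

lemma coordVar_inj {i i' : Fin N} : coordVar N m i = coordVar N m i' ↔ i = i' := by
  simp only [coordVar, Fin.mk.injEq]
  constructor
  · intro h; exact Fin.ext (by omega)
  · rintro rfl; rfl

lemma coordCl_inj {j j' : Fin m} : coordCl N m j = coordCl N m j' ↔ j = j' := by
  simp only [coordCl, Fin.mk.injEq]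
  constructor
  · intro h; exact Fin.ext (by omega)
  · rintro rfl; rfl

end Aux

section Val

variable (F : Type*) [Field F] (N m ℓ : ℕ) (Cl : Fin m → Fin 3 → (Fin N × Bool))

lemma val_inl_coord0 (k : Fin ℓ) :
    subsetPhiElem F N m ℓ Cl (Sum.inl k) (coord0 N m) = 1 := by
  simp [subsetPhiElem]

lemma val_inl_var (k : Fin ℓ) (i : Fin N) :
    subsetPhiElem F N m ℓ Cl (Sum.inl k) (coordVar N m i) =
      if k.val = 0 then 0 else 1 := by
  simp only [subsetPhiElem, if_neg (Ne.symm (coord0_ne_coordVar i))]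
  by_cases hk : k.val = 0
  · simp [hk]
  · have hcond : k.val ≠ 0 ∧ ∃ i' : Fin N, coordVar N m i = coordVar N m i' := ⟨hk, i, rfl⟩
    rw [if_pos hcond, if_neg hk]

lemma val_inl_cl (k : Fin ℓ) (j : Fin m) :
    subsetPhiElem F N m ℓ Cl (Sum.inl k) (coordCl N m j) = 0 := by
  simp only [subsetPhiElem, if_neg (Ne.symm (coord0_ne_coordCl j))]
  rw [if_neg]
  rintro ⟨-, i, hi⟩
  exact coordVar_ne_coordCl i j hi.symm

lemma val_lit_coord0 (i : Fin N) (b : Bool) :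
    subsetPhiElem F N m ℓ Cl (Sum.inr (Sum.inl (i, b))) (coord0 N m) = 0 := by
  simp only [subsetPhiElem, if_neg (coord0_ne_coordVar i)]
  rw [if_neg]
  rintro ⟨j, hj, -⟩
  exact coord0_ne_coordCl j hj

lemma val_lit_var (i : Fin N) (b : Bool) (i' : Fin N) :
    subsetPhiElem F N m ℓ Cl (Sum.inr (Sum.inl (i, b))) (coordVar N m i') =
      if i' = i then 1 else 0 := by
  simp only [subsetPhiElem]
  by_cases h : i' = i
  · simp [h, coordVar_inj]
  · rw [if_neg (fun hh => h (coordVar_inj.mp hh)), if_neg, if_neg h]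
    rintro ⟨j, hj, -⟩
    exact coordVar_ne_coordCl i' j hj

lemma val_lit_cl (i : Fin N) (b : Bool) (j : Fin m) :
    subsetPhiElem F N m ℓ Cl (Sum.inr (Sum.inl (i, b))) (coordCl N m j) =
      if ∃ k : Fin 3, Cl j k = (i, b) then 1 else 0 := by
  simp only [subsetPhiElem, if_neg (Ne.symm (coordVar_ne_coordCl i j))]
  by_cases h : ∃ k : Fin 3, Cl j k = (i, b)
  · rw [if_pos ⟨j, rfl, h⟩, if_pos h]
  · rw [if_neg, if_neg h]
    rintro ⟨j', hj', hk⟩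
    exact h (coordCl_inj.mp hj' ▸ hk)

lemma val_gad_coord0 (j : Fin m) (k : Fin (ℓ - 1)) :
    subsetPhiElem F N m ℓ Cl (Sum.inr (Sum.inr (j, k))) (coord0 N m) = 0 := by
  simp only [subsetPhiElem, if_neg (coord0_ne_coordCl j)]

lemma val_gad_var (j : Fin m) (k : Fin (ℓ - 1)) (i : Fin N) :
    subsetPhiElem F N m ℓ Cl (Sum.inr (Sum.inr (j, k))) (coordVar N m i) = 0 := by
  simp only [subsetPhiElem, if_neg (coordVar_ne_coordCl i j)]

lemma val_gad_cl (j : Fin m) (k : Fin (ℓ - 1)) (j' : Fin m) :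
    subsetPhiElem F N m ℓ Cl (Sum.inr (Sum.inr (j, k))) (coordCl N m j') =
      if j' = j then 1 else 0 := by
  simp only [subsetPhiElem]
  by_cases h : j' = j
  · simp [h]
  · rw [if_neg (fun hh => h (coordCl_inj.mp hh)), if_neg h]

end Val

/-- If exactly `ℓ` elements of `S` take value `1` (and the rest take value `0`),
then the `ℓ`-th elementary symmetric polynomial of the values is `1`. -/
lemma key_sum {I : Type*} [DecidableEq I] {F : Type*} [Field F] (S : Finset I)
    (f : I → F) (hf : ∀ e, f e = 0 ∨ f e = 1) (ℓ : ℕ)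
    [DecidablePred fun e => f e = 1]
    (h : (S.filter (fun e => f e = 1)).card = ℓ) :
    ∑ T ∈ S.powersetCard ℓ, ∏ e ∈ T, f e = 1 := by
  classical
  set Fc := S.filter (fun e => f e = 1) with hFc
  have hsub : Fc ⊆ S := filter_subset _ _
  have hprod : ∀ T ∈ S.powersetCard ℓ, ∏ e ∈ T, f e = if T ⊆ Fc then 1 else 0 := by
    intro T hT
    rw [mem_powersetCard] at hT
    split_ifs with hTF
    · exact Finset.prod_eq_one fun e he => (mem_filter.mp (hTF he)).2
    · obtain ⟨e, heT, heF⟩ := not_subset.mp hTF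
      refine Finset.prod_eq_zero heT ?_
      rcases hf e with h0 | h1
      · exact h0
      · exact absurd (mem_filter.mpr ⟨hT.1 heT, h1⟩) heF
  rw [Finset.sum_congr rfl hprod, Finset.sum_boole]
  have hset : (S.powersetCard ℓ).filter (fun T => T ⊆ Fc) = {Fc} := by
    rw [← h, ← Finset.powersetCard_self Fc]
    ext T
    simp only [mem_filter, mem_powersetCard]
    constructor
    · rintro ⟨⟨-, hc⟩, hs⟩; exact ⟨hs, hc⟩
    · rintro ⟨hs, hc⟩; exact ⟨⟨hs.trans hsub, hc⟩, hs⟩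
  rw [hset, Finset.card_singleton, Nat.cast_one]

/-- Cardinality of an initial segment of `Fin n`. -/
lemma card_filter_lt (n c : ℕ) (hc : c ≤ n) :
    ((Finset.univ : Finset (Fin n)).filter (fun k => k.val < c)).card = c := by
  have he : (Finset.univ : Finset (Fin n)).filter (fun k => k.val < c) =
      (Finset.range c).attachFin (fun x hx => lt_of_lt_of_le (Finset.mem_range.mp hx) hc) := by
    ext k; simp [Finset.mem_attachFin]
  rw [he, Finset.card_attachFin, Finset.card_range]

/-- Completeness of the Subset-`φ_ℓ` reduction with a cardinality bound: if the 3-CNF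
formula is satisfiable then there is a witness subset `S` whose `ℓ`-th elementary
symmetric polynomial is the all-ones vector and whose size lies between
`ℓ + N + (ℓ−3)·m` and `ℓ + N + (ℓ−1)·m`. -/
theorem subsetPhi_ell_completeness_card (N m ℓ : ℕ) (hℓ : 3 ≤ ℓ)
    (F : Type*) [Field F]
    (Cl : Fin m → Fin 3 → (Fin N × Bool))
    (hdist : ∀ j : Fin m, ∀ k₁ k₂ : Fin 3, k₁ ≠ k₂ → (Cl j k₁).1 ≠ (Cl j k₂).1)
    (hsat : ∃ A : Fin N → Bool, ∀ j : Fin m, ∃ k : Fin 3, A (Cl j k).1 = (Cl j k).2) :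
    ∃ S : Finset (Fin ℓ ⊕ ((Fin N × Bool) ⊕ (Fin m × Fin (ℓ - 1)))),
      (∀ c : Fin (1 + N + m),
        ∑ T ∈ S.powersetCard ℓ, ∏ e ∈ T, subsetPhiElem F N m ℓ Cl e c = 1) ∧
      ℓ + N + (ℓ - 3) * m ≤ S.card ∧ S.card ≤ ℓ + N + (ℓ - 1) * m := by
  classical
  obtain ⟨A, hA⟩ := hsat
  set t := fun j : Fin m =>
    (univ.filter (fun k : Fin 3 => A (Cl j k).1 = (Cl j k).2)).card with htdef
  have ht1 : ∀ j, 1 ≤ t j := by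
    intro j
    obtain ⟨k, hk⟩ := hA j
    exact Finset.card_pos.mpr ⟨k, mem_filter.mpr ⟨mem_univ _, hk⟩⟩
  have ht3 : ∀ j, t j ≤ 3 := by
    intro j
    simpa using Finset.card_filter_le (univ : Finset (Fin 3))
      (fun k => A (Cl j k).1 = (Cl j k).2)
  let e1 : Fin ℓ ↪ (Fin ℓ ⊕ ((Fin N × Bool) ⊕ (Fin m × Fin (ℓ - 1)))) :=
    ⟨Sum.inl, Sum.inl_injective⟩
  let e2 : Fin N ↪ (Fin ℓ ⊕ ((Fin N × Bool) ⊕ (Fin m × Fin (ℓ - 1)))) :=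
    ⟨fun i => Sum.inr (Sum.inl (i, A i)), by
    intro a b h
    simp only [Sum.inr.injEq, Sum.inl.injEq, Prod.mk.injEq] at h
    exact h.1⟩
  let e3 : Fin m × Fin (ℓ - 1) ↪ (Fin ℓ ⊕ ((Fin N × Bool) ⊕ (Fin m × Fin (ℓ - 1)))) :=
    ⟨fun p => Sum.inr (Sum.inr p), by
      intro a b h
      simpa using h⟩
  set S1 := univ.map e1 with hS1
  set S2 := univ.map e2 with hS2
  set S3 := (univ.filter (fun p : Fin m × Fin (ℓ - 1) => p.2.val < ℓ - t p.1)).map e3 with hS3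
  have d12 : Disjoint S1 S2 := by
    rw [Finset.disjoint_left]
    rintro a ha hb
    obtain ⟨k, -, rfl⟩ := mem_map.mp ha
    obtain ⟨i, -, hi⟩ := mem_map.mp hb
    exact absurd hi (by simp [e1, e2])
  have d13 : Disjoint S1 S3 := by
    rw [Finset.disjoint_left]
    rintro a ha hb
    obtain ⟨k, -, rfl⟩ := mem_map.mp ha
    obtain ⟨p, -, hp⟩ := mem_map.mp hb
    exact absurd hp (by simp [e1, e3])
  have d23 : Disjoint S2 S3 := by
    rw [Finset.disjoint_left]
    rintro a ha hb
    obtain ⟨i, -, rfl⟩ := mem_map.mp ha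
    obtain ⟨p, -, hp⟩ := mem_map.mp hb
    exact absurd hp (fun h => by
      have h' : (Sum.inr (Sum.inr p) : Fin ℓ ⊕ ((Fin N × Bool) ⊕ (Fin m × Fin (ℓ - 1)))) =
        Sum.inr (Sum.inl (i, A i)) := h
      simp at h')
  have d123 : Disjoint (S1 ∪ S2) S3 := Finset.disjoint_union_left.mpr ⟨d13, d23⟩
  have hS3card : S3.card = ∑ j : Fin m, (ℓ - t j) := by
    rw [hS3, Finset.card_map, Finset.card_filter, Fintype.sum_prod_type]
    refine Finset.sum_congr rfl fun j _ => ?_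
    rw [← Finset.card_filter]
    exact card_filter_lt (ℓ - 1) (ℓ - t j) (by have := ht1 j; omega)
  have hcard : (S1 ∪ S2 ∪ S3).card = ℓ + N + ∑ j : Fin m, (ℓ - t j) := by
    rw [Finset.card_union_of_disjoint d123, Finset.card_union_of_disjoint d12, hS3card,
      hS1, hS2, Finset.card_map, Finset.card_map, card_univ, card_univ,
      Fintype.card_fin, Fintype.card_fin]
  have hsplit : ∀ c : Fin (1 + N + m),
      ((S1 ∪ S2 ∪ S3).filter (fun e => subsetPhiElem F N m ℓ Cl e c = 1)).card
        = (univ.filter (fun k : Fin ℓ =>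
            subsetPhiElem F N m ℓ Cl (Sum.inl k) c = 1)).card
        + (univ.filter (fun i : Fin N =>
            subsetPhiElem F N m ℓ Cl (Sum.inr (Sum.inl (i, A i))) c = 1)).card
        + (univ.filter (fun p : Fin m × Fin (ℓ - 1) => p.2.val < ℓ - t p.1 ∧
            subsetPhiElem F N m ℓ Cl (Sum.inr (Sum.inr p)) c = 1)).card := by
    intro c
    rw [filter_union, filter_union,
      Finset.card_union_of_disjoint
        (Finset.disjoint_union_left.mpr
          ⟨Finset.disjoint_filter_filter d13, Finset.disjoint_filter_filter d23⟩),
      Finset.card_union_of_disjoint (Finset.disjoint_filter_filter d12),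
      hS1, hS2, hS3, Finset.filter_map, Finset.filter_map, Finset.filter_map,
      Finset.card_map, Finset.card_map, Finset.card_map, Finset.filter_filter]
    rfl
  refine ⟨S1 ∪ S2 ∪ S3, ?_, ?_, ?_⟩
  · -- the elementary symmetric polynomial is 1 at every coordinate
    intro c
    have hf01 : ∀ e : Fin ℓ ⊕ ((Fin N × Bool) ⊕ (Fin m × Fin (ℓ - 1))),
        subsetPhiElem F N m ℓ Cl e c = 0 ∨
        subsetPhiElem F N m ℓ Cl e c = 1 := by
      rintro (k | ⟨i, b⟩ | ⟨j, k⟩) <;> simp only [subsetPhiElem] <;> split_ifs <;> simp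
    have hc : c = coord0 N m ∨ (∃ i, c = coordVar N m i) ∨ ∃ j, c = coordCl N m j := by
      have hv := c.isLt
      by_cases h0 : c.val = 0
      · exact Or.inl (Fin.ext (by simpa [coord0] using h0))
      · by_cases h1 : c.val < 1 + N
        · exact Or.inr (Or.inl ⟨⟨c.val - 1, by omega⟩, Fin.ext (by simp [coordVar]; omega)⟩)
        · exact Or.inr (Or.inr ⟨⟨c.val - 1 - N, by omega⟩, Fin.ext (by simp [coordCl]; omega)⟩)
    haveI : NeZero ℓ := ⟨by omega⟩
    have hzero : ∀ k : Fin ℓ, k.val = 0 ↔ k = 0 := by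
      intro k
      constructor
      · intro h; exact Fin.ext (by simp [h])
      · rintro rfl; simp
    refine key_sum _ _ hf01 ℓ ?_
    rw [hsplit c]
    rcases hc with rfl | ⟨i, rfl⟩ | ⟨j, rfl⟩
    · -- coordinate 0
      have hA' : (univ.filter (fun k : Fin ℓ =>
          subsetPhiElem F N m ℓ Cl (Sum.inl k) (coord0 N m) = 1)).card = ℓ := by
        simp [val_inl_coord0]
      have hB' : (univ.filter (fun i : Fin N =>
          subsetPhiElem F N m ℓ Cl (Sum.inr (Sum.inl (i, A i))) (coord0 N m) = 1)).card
          = 0 := by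
        simp [val_lit_coord0]
      have hC' : (univ.filter (fun p : Fin m × Fin (ℓ - 1) => p.2.val < ℓ - t p.1 ∧
          subsetPhiElem F N m ℓ Cl (Sum.inr (Sum.inr p)) (coord0 N m) = 1)).card = 0 := by
        rw [Finset.card_eq_zero, Finset.filter_eq_empty_iff]
        rintro ⟨j, k⟩ -
        simp [val_gad_coord0]
      rw [hA', hB', hC']
      omega
    · -- a variable coordinate
      have hA' : (univ.filter (fun k : Fin ℓ =>
          subsetPhiElem F N m ℓ Cl (Sum.inl k) (coordVar N m i) = 1)).card = ℓ - 1 := by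
        have hset : (univ.filter (fun k : Fin ℓ =>
            subsetPhiElem F N m ℓ Cl (Sum.inl k) (coordVar N m i) = 1))
            = univ.filter (fun k : Fin ℓ => k ≠ 0) := by
          ext k
          simp only [mem_filter, mem_univ, true_and, val_inl_var]
          rcases eq_or_ne k 0 with rfl | hk
          · simp [(hzero 0).mpr rfl]
          · rw [if_neg (fun h => hk ((hzero k).mp h))]
            simp [hk]
        rw [hset, filter_ne', card_erase_of_mem (mem_univ _), card_univ, Fintype.card_fin]
      have hB' : (univ.filter (fun i' : Fin N =>
          subsetPhiElem F N m ℓ Cl (Sum.inr (Sum.inl (i', A i'))) (coordVar N m i) = 1)).card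
          = 1 := by
        have hset : (univ.filter (fun i' : Fin N =>
            subsetPhiElem F N m ℓ Cl (Sum.inr (Sum.inl (i', A i'))) (coordVar N m i) = 1))
            = {i} := by
          ext i'
          simp only [mem_filter, mem_univ, true_and, val_lit_var, mem_singleton]
          rcases eq_or_ne i i' with rfl | h
          · simp
          · simp [h, Ne.symm h]
        rw [hset, card_singleton]
      have hC' : (univ.filter (fun p : Fin m × Fin (ℓ - 1) => p.2.val < ℓ - t p.1 ∧
          subsetPhiElem F N m ℓ Cl (Sum.inr (Sum.inr p)) (coordVar N m i) = 1)).card = 0 := by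
        rw [Finset.card_eq_zero, Finset.filter_eq_empty_iff]
        rintro ⟨j, k⟩ -
        simp [val_gad_var]
      rw [hA', hB', hC']
      omega
    · -- a clause coordinate
      have hA' : (univ.filter (fun k : Fin ℓ =>
          subsetPhiElem F N m ℓ Cl (Sum.inl k) (coordCl N m j) = 1)).card = 0 := by
        simp [val_inl_cl]
      have hB' : (univ.filter (fun i : Fin N =>
          subsetPhiElem F N m ℓ Cl (Sum.inr (Sum.inl (i, A i))) (coordCl N m j) = 1)).card
          = t j := by
        have hset : (univ.filter (fun i : Fin N =>
            subsetPhiElem F N m ℓ Cl (Sum.inr (Sum.inl (i, A i))) (coordCl N m j) = 1))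
            = univ.filter (fun i : Fin N => ∃ k : Fin 3, Cl j k = (i, A i)) := by
          ext i
          simp only [mem_filter, mem_univ, true_and, val_lit_cl]
          by_cases h : ∃ k : Fin 3, Cl j k = (i, A i)
          · simp [h]
          · simp [h]
        rw [hset]
        refine (Finset.card_bij (fun k _ => (Cl j k).1) ?_ ?_ ?_).symm
        · intro k hk
          rw [mem_filter] at hk ⊢
          exact ⟨mem_univ _, k, Prod.ext rfl hk.2.symm⟩
        · intro k1 h1 k2 h2 h
          by_contra hne
          exact hdist j k1 k2 hne h
        · intro i hi
          rw [mem_filter] at hi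
          obtain ⟨-, k, hk⟩ := hi
          refine ⟨k, mem_filter.mpr ⟨mem_univ _, ?_⟩, ?_⟩
          · simp [hk]
          · show (Cl j k).1 = i
            simp [hk]
      have hC' : (univ.filter (fun p : Fin m × Fin (ℓ - 1) => p.2.val < ℓ - t p.1 ∧
          subsetPhiElem F N m ℓ Cl (Sum.inr (Sum.inr p)) (coordCl N m j) = 1)).card
          = ℓ - t j := by
        have hset : (univ.filter (fun p : Fin m × Fin (ℓ - 1) => p.2.val < ℓ - t p.1 ∧
            subsetPhiElem F N m ℓ Cl (Sum.inr (Sum.inr p)) (coordCl N m j) = 1))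
            = (univ.filter (fun k : Fin (ℓ - 1) => k.val < ℓ - t j)).image
                (fun k => (j, k)) := by
          ext p
          obtain ⟨j', k⟩ := p
          simp only [mem_filter, mem_univ, true_and, val_gad_cl, mem_image]
          by_cases h : j = j'
          · subst h
            simp only [if_pos rfl]
            constructor
            · rintro ⟨hk, -⟩; exact ⟨k, by simpa using hk⟩
            · rintro ⟨k', hk', hkk⟩
              obtain ⟨-, rfl⟩ : j = j ∧ k' = k := by simpa [Prod.ext_iff] using hkk
              exact ⟨by simpa using hk', rfl⟩
          · rw [if_neg h]
            constructor
            · rintro ⟨-, hbad⟩; exact absurd hbad zero_ne_one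
            · rintro ⟨k', -, hkk⟩
              exact absurd (by simpa [Prod.ext_iff] using hkk : j = j' ∧ k' = k).1 h
        rw [hset, Finset.card_image_of_injective _ (fun a b h => by simpa using h)]
        exact card_filter_lt (ℓ - 1) (ℓ - t j) (by have := ht1 j; omega)
      rw [hA', hB', hC']
      have := ht3 j
      omega
  · -- lower cardinality bound
    rw [hcard]
    have hlow : (ℓ - 3) * m ≤ ∑ j : Fin m, (ℓ - t j) := by
      calc (ℓ - 3) * m = ∑ _j : Fin m, (ℓ - 3) := by
            rw [Finset.sum_const, card_univ, Fintype.card_fin, smul_eq_mul, mul_comm]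
        _ ≤ _ := Finset.sum_le_sum fun j _ => by have := ht3 j; omega
    omega
  · -- upper cardinality bound
    rw [hcard]
    have hhigh : ∑ j : Fin m, (ℓ - t j) ≤ (ℓ - 1) * m := by
      calc ∑ j : Fin m, (ℓ - t j) ≤ ∑ _j : Fin m, (ℓ - 1) :=
            Finset.sum_le_sum fun j _ => by have := ht1 j; omega
        _ = (ℓ - 1) * m := by
            rw [Finset.sum_const, card_univ, Fintype.card_fin, smul_eq_mul, mul_comm]
    omega
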